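/- Let B be the v×v adjacency matrix of an SRG(v,k,λ,μ) with μ = k/2 and k > 0, let β ∈ ℝ be nonzero, let n = v+1, and let G be the n×n block matrix G = [[1, β𝟏ᵀ],[β𝟏, 2βB + (β+1)I − βJ]]. Then G² = αG for a real number α if and only if α = vβ² + 1 and vβ² + (v−2k−1)β − 1 = 0; equivalently, β = (1/(2v))·[−(v−2k−1) ± sqrt((v−2k−1)²+4v)]. -/

import Mathlib

open Matrix

/-- The `v × v` all-ones matrix `J`. -/
def allOnes (v : ℕ) : Matrix (Fin v) (Fin v) ℝ := Matrix.of fun _ _ => 1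

/-- The `(v+1) × (v+1)` block matrix `[[1, β𝟏ᵀ], [β𝟏, 2βB + (β+1)I - βJ]]`. -/
def blockGram (v : ℕ) (B : Matrix (Fin v) (Fin v) ℝ) (β : ℝ) :
    Matrix (Fin (v + 1)) (Fin (v + 1)) ℝ :=
  Matrix.of fun i j =>
    if hi : i = 0 then (if j = 0 then 1 else β)
    else if hj : j = 0 then β
    else 2 * β * B (i.pred hi) (j.pred hj) + (β + 1) * (if i = j then 1 else 0) - β

variable {v : ℕ} {B : Matrix (Fin v) (Fin v) ℝ} {β : ℝ}

lemma bg00 : blockGram v B β 0 0 = 1 := by simp [blockGram]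
lemma bg0s (b : Fin v) : blockGram v B β 0 b.succ = β := by
  simp [blockGram, Fin.succ_ne_zero]
lemma bgs0 (a : Fin v) : blockGram v B β a.succ 0 = β := by
  simp [blockGram, Fin.succ_ne_zero]
lemma bgss (a b : Fin v) : blockGram v B β a.succ b.succ =
    2*β*B a b + (β+1)*(if a = b then 1 else 0) - β := by
  simp [blockGram, Fin.succ_ne_zero, Fin.pred_succ, Fin.succ_inj]

/-- Let `B` be the adjacency matrix of an `SRG(v,k,λ,μ)` with `μ = k/2` and `k > 0`,
let `β ≠ 0`, and let `G = [[1, β𝟏ᵀ], [β𝟏, 2βB + (β+1)I - βJ]]`.  Then `G² = αG`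
iff `α = vβ² + 1` and `vβ² + (v-2k-1)β - 1 = 0`; equivalently,
`β = (1/(2v))[-(v-2k-1) ± √((v-2k-1)²+4v)]`. -/
theorem blockGram_quadratic_iff (v : ℕ) (hv : 0 < v)
    (B : Matrix (Fin v) (Fin v) ℝ) (k l : ℝ) (hk : 0 < k)
    (hsym : B.IsSymm)
    (h01 : ∀ i j, B i j = 0 ∨ B i j = 1)
    (hdiag : ∀ i, B i i = 0)
    (hsrg : B * B = (l - k / 2) • B + (k - k / 2) • 1 + (k / 2) • allOnes v)
    (β : ℝ) (hβ : β ≠ 0) (α : ℝ) :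
    blockGram v B β * blockGram v B β = α • blockGram v B β ↔
      (α = (v : ℝ) * β ^ 2 + 1 ∧
        (v : ℝ) * β ^ 2 + ((v : ℝ) - 2 * k - 1) * β - 1 = 0 ∧
        (β = (1 / (2 * (v : ℝ)))
            * (-((v : ℝ) - 2 * k - 1) + Real.sqrt (((v : ℝ) - 2 * k - 1) ^ 2 + 4 * v)) ∨
          β = (1 / (2 * (v : ℝ)))
            * (-((v : ℝ) - 2 * k - 1) - Real.sqrt (((v : ℝ) - 2 * k - 1) ^ 2 + 4 * v)))) := by
  have hk' : k ≠ 0 := ne_of_gt hk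
  -- row sums
  have hrow : ∀ a : Fin v, ∑ b, B a b = k := by
    intro a
    have h1 := congrFun (congrFun hsrg a) a
    simp only [Matrix.mul_apply, Matrix.add_apply, Matrix.smul_apply, Matrix.one_apply_eq,
      allOnes, Matrix.of_apply, smul_eq_mul, hdiag, mul_zero, mul_one] at h1
    have h2 : ∀ b : Fin v, B a b * B b a = B a b := by
      intro b; rw [hsym.apply a b]
      rcases h01 a b with h | h <;> simp [h]
    rw [Finset.sum_congr rfl (fun b _ => h2 b)] at h1
    linarith
  have hcol : ∀ b : Fin v, ∑ a, B a b = k := by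
    intro b
    rw [Finset.sum_congr rfl (fun a _ => (hsym.apply a b).symm)]
    exact hrow b
  -- all-ones products
  have hJJ : allOnes v * allOnes v = (v:ℝ) • allOnes v := by
    ext i j
    simp [allOnes, Matrix.mul_apply, Finset.sum_const, Finset.card_univ]
  have hBJ : B * allOnes v = k • allOnes v := by
    ext i j
    simp [allOnes, Matrix.mul_apply, hrow i]
  have hJB : allOnes v * B = k • allOnes v := by
    ext i j
    simp [allOnes, Matrix.mul_apply, hcol j]
  -- value of l
  have hE : k * k = (l - k/2) * k + (k - k/2) + (v:ℝ) * (k/2) := by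
    have a : Fin v := ⟨0, hv⟩
    have h1 := congrFun (congrFun hsrg a)
    have h2 : ∑ j, (B*B) a j = k * k := by
      simp only [Matrix.mul_apply]
      rw [Finset.sum_comm]
      rw [Finset.sum_congr rfl (fun m _ => by rw [← Finset.mul_sum, hrow m])]
      rw [← Finset.sum_mul, hrow a]
    rw [Finset.sum_congr rfl (g := fun j => ((l - k / 2) • B + (k - k / 2) • 1 + (k / 2) • allOnes v) a j) (fun j _ => h1 j)] at h2
    simp only [Matrix.add_apply, Matrix.smul_apply, Matrix.one_apply, allOnes,
      Matrix.of_apply, smul_eq_mul, mul_ite, mul_one, mul_zero] at h2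
    rw [Finset.sum_add_distrib, Finset.sum_add_distrib, ← Finset.mul_sum, hrow a,
      Finset.sum_ite_eq, Finset.sum_const, Finset.card_univ, Fintype.card_fin] at h2
    simp at h2
    linarith [h2]
  have hl : l = (3*k - (v:ℝ) - 1)/2 := by
    have h2 : l * k = ((3*k - (v:ℝ) - 1)/2) * k := by linear_combination -hE
    exact mul_right_cancel₀ hk' h2
  -- the lower-right block
  set M : Matrix (Fin v) (Fin v) ℝ := (2*β) • B + (β+1) • 1 - β • allOnes v with hM
  have hM2 : M * M = (4*β^2*(l-k/2) + 4*β*(β+1)) • B + (2*k*β^2 + (β+1)^2) • (1 : Matrix (Fin v) (Fin v) ℝ)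
      + ((v:ℝ)*β^2 - 2*k*β^2 - 2*β*(β+1)) • allOnes v := by
    rw [hM]
    simp only [sub_mul, mul_sub, add_mul, mul_add, Matrix.smul_mul, Matrix.mul_smul,
      Matrix.one_mul, Matrix.mul_one, hsrg, hBJ, hJB, hJJ, smul_smul, smul_add, smul_sub]
    module
  have hMapp : ∀ a b : Fin v, M a b = 2*β*B a b + (β+1)*(if a = b then 1 else 0) - β := by
    intro a b
    simp [hM, Matrix.add_apply, Matrix.sub_apply, Matrix.smul_apply, Matrix.one_apply,
      allOnes, smul_eq_mul]
  have hmulss : ∀ a b : Fin v, (blockGram v B β * blockGram v B β) a.succ b.succ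
      = β*β + (M*M) a b := by
    intro a b
    rw [Matrix.mul_apply, Matrix.mul_apply, Fin.sum_univ_succ, bgs0, bg0s]
    congr 1
    exact Finset.sum_congr rfl fun m _ => by rw [bgss, bgss, hMapp, hMapp]
  -- sums of a row/column of M
  have hsumcol : ∀ b : Fin v, ∑ m : Fin v, (2*β*B m b + (β+1)*(if m = b then 1 else 0) - β)
      = 2*β*k + (β+1) - (v:ℝ)*β := by
    intro b
    rw [Finset.sum_sub_distrib, Finset.sum_add_distrib, ← Finset.mul_sum, hcol b,
      ← Finset.mul_sum, Finset.sum_ite_eq', Finset.sum_const, Finset.card_univ,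
      Fintype.card_fin]
    simp [mul_comm]
  have hsumrow : ∀ a : Fin v, ∑ m : Fin v, (2*β*B a m + (β+1)*(if a = m then 1 else 0) - β)
      = 2*β*k + (β+1) - (v:ℝ)*β := by
    intro a
    rw [Finset.sum_sub_distrib, Finset.sum_add_distrib, ← Finset.mul_sum, hrow a,
      ← Finset.mul_sum, Finset.sum_ite_eq, Finset.sum_const, Finset.card_univ,
      Fintype.card_fin]
    simp [mul_comm]
  have hv' : (v:ℝ) ≠ 0 := Nat.cast_ne_zero.mpr hv.ne'
  have h2v : (2*(v:ℝ)) ≠ 0 := by positivity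
  constructor
  · intro h
    have e00 := congrFun (congrFun h 0) 0
    rw [Matrix.mul_apply, Fin.sum_univ_succ] at e00
    simp only [bg00, bg0s, bgs0, Matrix.smul_apply, smul_eq_mul, mul_one, one_mul] at e00
    rw [Finset.sum_const, Finset.card_univ, Fintype.card_fin, nsmul_eq_mul] at e00
    have hα : α = (v:ℝ)*β^2 + 1 := by linear_combination -e00
    have e0 := congrFun (congrFun h 0) (Fin.succ ⟨0, hv⟩)
    rw [Matrix.mul_apply, Fin.sum_univ_succ] at e0
    simp only [bg00, bg0s, bgs0, bgss, Matrix.smul_apply, smul_eq_mul, one_mul] at e0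
    rw [← Finset.mul_sum, hsumcol ⟨0, hv⟩] at e0
    rw [hα] at e0
    have hQβ : β * ((v:ℝ)*β^2 + ((v:ℝ)-2*k-1)*β - 1) = 0 := by linear_combination -e0
    have hQ : (v:ℝ)*β^2 + ((v:ℝ)-2*k-1)*β - 1 = 0 := by
      rcases mul_eq_zero.mp hQβ with h' | h'
      · exact absurd h' hβ
      · exact h'
    refine ⟨hα, hQ, ?_⟩
    have hle : Real.sqrt (((v:ℝ)-2*k-1)^2 + 4*v) = |2*(v:ℝ)*β + ((v:ℝ)-2*k-1)| := by
      rw [← Real.sqrt_sq_eq_abs]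
      congr 1
      linear_combination (-4*(v:ℝ))*hQ
    rcases abs_cases (2*(v:ℝ)*β + ((v:ℝ)-2*k-1)) with ⟨ha, _⟩ | ⟨ha, _⟩
    · left
      rw [hle, ha]
      field_simp
      try ring
    · right
      rw [hle, ha]
      field_simp
      try ring
  · rintro ⟨hα, hQ, -⟩
    subst hα
    subst hl
    ext i j
    induction i using Fin.cases with
    | zero =>
      induction j using Fin.cases with
      | zero =>
        rw [Matrix.mul_apply, Fin.sum_univ_succ, Matrix.smul_apply]
        simp only [bg00, bg0s, bgs0, smul_eq_mul, mul_one, one_mul]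
        rw [Finset.sum_const, Finset.card_univ, Fintype.card_fin, nsmul_eq_mul]
        ring
      | succ b =>
        rw [Matrix.mul_apply, Fin.sum_univ_succ, Matrix.smul_apply]
        simp only [bg00, bg0s, bgs0, bgss, smul_eq_mul, one_mul]
        rw [← Finset.mul_sum, hsumcol b]
        linear_combination -β*hQ
    | succ a =>
      induction j using Fin.cases with
      | zero =>
        rw [Matrix.mul_apply, Fin.sum_univ_succ, Matrix.smul_apply]
        simp only [bg00, bg0s, bgs0, bgss, smul_eq_mul, mul_one]
        rw [← Finset.sum_mul, hsumrow a]
        linear_combination -β*hQ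
      | succ b =>
        rw [Matrix.smul_apply, hmulss a b, hM2]
        simp only [Matrix.add_apply, Matrix.smul_apply, Matrix.one_apply, allOnes,
          Matrix.of_apply, smul_eq_mul, bgss]
        linear_combination (β - 2*β*(B a b) - β*(if a = b then (1:ℝ) else 0)) * hQ
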